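/- The map δ on sl_{n+1}(ℂ) given by δ(E_{i,j}) = (1/(2n+2)) Σ_{k} (E_{i,k} ⊗ E_{k,j} − E_{k,j} ⊗ E_{i,k}) satisfies the co-Jacobi identity: (1 + ξ + ξ²) ∘ (1 ⊗ δ) ∘ δ = 0, where ξ is the cyclic permutation on the triple tensor product. Hence (sl_{n+1}(ℂ), δ) is a Lie coalgebra. -/

import Mathlib

open TensorProduct Matrix LieAlgebra.SpecialLinear

abbrev glC (m : ℕ) := Matrix (Fin m) (Fin m) ℂ

abbrev EM {m : ℕ} (i j : Fin m) : glC m := Matrix.single i j 1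

/-- The flip map `τ`. -/
noncomputable abbrev tauMap (m : ℕ) : glC m ⊗[ℂ] glC m →ₗ[ℂ] glC m ⊗[ℂ] glC m :=
  (TensorProduct.comm ℂ (glC m) (glC m)).toLinearMap

/-- The cyclic permutation `ξ : u ⊗ v ⊗ w ↦ v ⊗ w ⊗ u` (right-associated tensors). -/
noncomputable abbrev xiMap (m : ℕ) :
    glC m ⊗[ℂ] (glC m ⊗[ℂ] glC m) →ₗ[ℂ] glC m ⊗[ℂ] (glC m ⊗[ℂ] glC m) :=
  ((TensorProduct.leftComm ℂ (glC m) (glC m) (glC m)).trans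
    (TensorProduct.congr (LinearEquiv.refl ℂ (glC m))
      (TensorProduct.comm ℂ (glC m) (glC m)))).toLinearMap

lemma xi_tmul {m : ℕ} (a b c : glC m) :
    xiMap m (a ⊗ₜ[ℂ] (b ⊗ₜ[ℂ] c)) = b ⊗ₜ[ℂ] (c ⊗ₜ[ℂ] a) := rfl

lemma sum_antisym {m : ℕ} {M : Type*} [AddCommGroup M] (g : Fin m → Fin m → M) :
    ∑ k : Fin m, ∑ l : Fin m, (g k l - g l k) = 0 := by
  have h : ∑ k : Fin m, ∑ l : Fin m, (g k l - g l k)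
      = (∑ k : Fin m, ∑ l : Fin m, g k l) - (∑ k : Fin m, ∑ l : Fin m, g l k) := by
    simp [Finset.sum_sub_distrib]
  rw [h, sub_eq_zero]
  exact Finset.sum_comm

lemma smul_sum_sub {m p : ℕ} (c : ℂ)
    (f g : Fin p → glC m ⊗[ℂ] (glC m ⊗[ℂ] glC m)) :
    c • ∑ l : Fin p, f l - c • ∑ l : Fin p, g l = c • ∑ l : Fin p, (f l - g l) := by
  rw [Finset.sum_sub_distrib (f := f) (g := g), smul_sub]

lemma sum_smul_eq_zero {m p : ℕ} (c : ℂ)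
    (h : Fin p → glC m ⊗[ℂ] (glC m ⊗[ℂ] glC m)) (hh : ∑ k : Fin p, h k = 0) :
    ∑ k : Fin p, c • h k = 0 := by
  rw [← Finset.smul_sum (f := h), hh, smul_zero]

lemma smul_sum_add {m p : ℕ} (c : ℂ)
    (f g : Fin p → glC m ⊗[ℂ] glC m) :
    c • ∑ l : Fin p, f l + c • ∑ l : Fin p, g l = c • ∑ l : Fin p, (f l + g l) := by
  rw [Finset.sum_add_distrib (f := f) (g := g), smul_add]

lemma key (n : ℕ)
    (δ : glC (n + 1) →ₗ[ℂ] glC (n + 1) ⊗[ℂ] glC (n + 1))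
    (hδ : ∀ i j : Fin (n + 1),
      δ (EM i j) = (1 / (2 * (n : ℂ) + 2)) •
        ∑ k : Fin (n + 1), (EM i k ⊗ₜ[ℂ] EM k j - EM k j ⊗ₜ[ℂ] EM i k))
    (i j : Fin (n + 1)) :
    ((LinearMap.id + xiMap (n + 1) + xiMap (n + 1) ∘ₗ xiMap (n + 1) :
        glC (n + 1) ⊗[ℂ] (glC (n + 1) ⊗[ℂ] glC (n + 1)) →ₗ[ℂ]
          glC (n + 1) ⊗[ℂ] (glC (n + 1) ⊗[ℂ] glC (n + 1))))
        ((LinearMap.lTensor (glC (n + 1)) δ) (δ (EM i j))) = 0 := by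
  set c : ℂ := 1 / (2 * (n : ℂ) + 2) with hc
  rw [hδ i j]
  simp only [_root_.map_smul, map_sum, map_sub, LinearMap.lTensor_tmul, hδ, tmul_smul, tmul_sum,
    tmul_sub, LinearMap.add_apply, LinearMap.comp_apply, LinearMap.id_apply,
    xi_tmul, ← Finset.smul_sum, ← Finset.sum_sub_distrib]
  rw [smul_eq_zero]
  right
  have h2 : ∀ k : Fin (n + 1),
      (c • ∑ l : Fin (n + 1),
          (EM i k ⊗ₜ[ℂ] (EM k l ⊗ₜ[ℂ] EM l j) + EM k l ⊗ₜ[ℂ] (EM l j ⊗ₜ[ℂ] EM i k) +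
              EM l j ⊗ₜ[ℂ] (EM i k ⊗ₜ[ℂ] EM k l) -
            (EM i k ⊗ₜ[ℂ] (EM l j ⊗ₜ[ℂ] EM k l) + EM l j ⊗ₜ[ℂ] (EM k l ⊗ₜ[ℂ] EM i k) +
              EM k l ⊗ₜ[ℂ] (EM i k ⊗ₜ[ℂ] EM l j))) -
        c • ∑ l : Fin (n + 1),
          (EM k j ⊗ₜ[ℂ] (EM i l ⊗ₜ[ℂ] EM l k) + EM i l ⊗ₜ[ℂ] (EM l k ⊗ₜ[ℂ] EM k j) +
              EM l k ⊗ₜ[ℂ] (EM k j ⊗ₜ[ℂ] EM i l) -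
            (EM k j ⊗ₜ[ℂ] (EM l k ⊗ₜ[ℂ] EM i l) + EM l k ⊗ₜ[ℂ] (EM i l ⊗ₜ[ℂ] EM k j) +
              EM i l ⊗ₜ[ℂ] (EM k j ⊗ₜ[ℂ] EM l k)))) =
      c • ∑ l : Fin (n + 1),
          ((EM i k ⊗ₜ[ℂ] (EM k l ⊗ₜ[ℂ] EM l j) + EM k l ⊗ₜ[ℂ] (EM l j ⊗ₜ[ℂ] EM i k) +
              EM l j ⊗ₜ[ℂ] (EM i k ⊗ₜ[ℂ] EM k l) -
            (EM i k ⊗ₜ[ℂ] (EM l j ⊗ₜ[ℂ] EM k l) + EM l j ⊗ₜ[ℂ] (EM k l ⊗ₜ[ℂ] EM i k) +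
              EM k l ⊗ₜ[ℂ] (EM i k ⊗ₜ[ℂ] EM l j))) -
           (EM k j ⊗ₜ[ℂ] (EM i l ⊗ₜ[ℂ] EM l k) + EM i l ⊗ₜ[ℂ] (EM l k ⊗ₜ[ℂ] EM k j) +
              EM l k ⊗ₜ[ℂ] (EM k j ⊗ₜ[ℂ] EM i l) -
            (EM k j ⊗ₜ[ℂ] (EM l k ⊗ₜ[ℂ] EM i l) + EM l k ⊗ₜ[ℂ] (EM i l ⊗ₜ[ℂ] EM k j) +
              EM i l ⊗ₜ[ℂ] (EM k j ⊗ₜ[ℂ] EM l k)))) := by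
    intro k
    exact smul_sum_sub c _ _
  rw [Finset.sum_congr rfl fun k _ => h2 k]
  refine sum_smul_eq_zero c _ ?_
  have : ∀ k l : Fin (n + 1),
      (EM i k ⊗ₜ[ℂ] (EM k l ⊗ₜ[ℂ] EM l j) + EM k l ⊗ₜ[ℂ] (EM l j ⊗ₜ[ℂ] EM i k) +
          EM l j ⊗ₜ[ℂ] (EM i k ⊗ₜ[ℂ] EM k l) -
        (EM i k ⊗ₜ[ℂ] (EM l j ⊗ₜ[ℂ] EM k l) + EM l j ⊗ₜ[ℂ] (EM k l ⊗ₜ[ℂ] EM i k) +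
          EM k l ⊗ₜ[ℂ] (EM i k ⊗ₜ[ℂ] EM l j)) -
        ((EM k j ⊗ₜ[ℂ] (EM i l ⊗ₜ[ℂ] EM l k) + EM i l ⊗ₜ[ℂ] (EM l k ⊗ₜ[ℂ] EM k j) +
          EM l k ⊗ₜ[ℂ] (EM k j ⊗ₜ[ℂ] EM i l)) -
         (EM k j ⊗ₜ[ℂ] (EM l k ⊗ₜ[ℂ] EM i l) + EM l k ⊗ₜ[ℂ] (EM i l ⊗ₜ[ℂ] EM k j) +
          EM i l ⊗ₜ[ℂ] (EM k j ⊗ₜ[ℂ] EM l k)))) =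
      (fun k l =>
        EM i k ⊗ₜ[ℂ] (EM k l ⊗ₜ[ℂ] EM l j) + EM k l ⊗ₜ[ℂ] (EM l j ⊗ₜ[ℂ] EM i k) +
        EM l j ⊗ₜ[ℂ] (EM i k ⊗ₜ[ℂ] EM k l) + EM k j ⊗ₜ[ℂ] (EM l k ⊗ₜ[ℂ] EM i l) +
        EM l k ⊗ₜ[ℂ] (EM i l ⊗ₜ[ℂ] EM k j) + EM i l ⊗ₜ[ℂ] (EM k j ⊗ₜ[ℂ] EM l k)) k l -
      (fun k l =>
        EM i k ⊗ₜ[ℂ] (EM k l ⊗ₜ[ℂ] EM l j) + EM k l ⊗ₜ[ℂ] (EM l j ⊗ₜ[ℂ] EM i k) +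
        EM l j ⊗ₜ[ℂ] (EM i k ⊗ₜ[ℂ] EM k l) + EM k j ⊗ₜ[ℂ] (EM l k ⊗ₜ[ℂ] EM i l) +
        EM l k ⊗ₜ[ℂ] (EM i l ⊗ₜ[ℂ] EM k j) + EM i l ⊗ₜ[ℂ] (EM k j ⊗ₜ[ℂ] EM l k)) l k := by
    intro k l
    beta_reduce
    abel
  rw [Finset.sum_congr rfl fun k _ => Finset.sum_congr rfl fun l _ => this k l]
  exact sum_antisym _

theorem statement1 (n : ℕ)
    (δ : glC (n + 1) →ₗ[ℂ] glC (n + 1) ⊗[ℂ] glC (n + 1))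
    (hδ : ∀ i j : Fin (n + 1),
      δ (EM i j) = (1 / (2 * (n : ℂ) + 2)) •
        ∑ k : Fin (n + 1), (EM i k ⊗ₜ[ℂ] EM k j - EM k j ⊗ₜ[ℂ] EM i k)) :
    (∀ x ∈ sl (Fin (n + 1)) ℂ,
      ((LinearMap.id + xiMap (n + 1) + xiMap (n + 1) ∘ₗ xiMap (n + 1) :
        glC (n + 1) ⊗[ℂ] (glC (n + 1) ⊗[ℂ] glC (n + 1)) →ₗ[ℂ]
          glC (n + 1) ⊗[ℂ] (glC (n + 1) ⊗[ℂ] glC (n + 1))))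
        ((LinearMap.lTensor (glC (n + 1)) δ) (δ x)) = 0) ∧
    (∀ x ∈ sl (Fin (n + 1)) ℂ, tauMap (n + 1) (δ x) + δ x = 0) := by
  have hb : ∀ (a : ℂ) (i j : Fin (n + 1)), Matrix.single i j a = a • EM i j := by
    intro a i j
    rw [Matrix.smul_single, smul_eq_mul, mul_one]
  have hrep : ∀ x : glC (n + 1),
      x = ∑ i : Fin (n + 1), ∑ j : Fin (n + 1), x i j • EM i j := by
    intro x
    conv_lhs => rw [matrix_eq_sum_single x]
    exact Finset.sum_congr rfl fun i _ => Finset.sum_congr rfl fun j _ => hb (x i j) i j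
  constructor
  · intro x _
    set F : glC (n + 1) →ₗ[ℂ] glC (n + 1) ⊗[ℂ] (glC (n + 1) ⊗[ℂ] glC (n + 1)) :=
      (LinearMap.id + xiMap (n + 1) + xiMap (n + 1) ∘ₗ xiMap (n + 1)) ∘ₗ
        LinearMap.lTensor (glC (n + 1)) δ ∘ₗ δ with hF
    have hF0 : ∀ i j : Fin (n + 1), F (EM i j) = 0 := fun i j => key n δ hδ i j
    show F x = 0
    rw [hrep x]
    simp only [map_sum, _root_.map_smul, hF0, smul_zero, Finset.sum_const_zero]
  · intro x _
    set L : glC (n + 1) →ₗ[ℂ] glC (n + 1) ⊗[ℂ] glC (n + 1) :=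
      tauMap (n + 1) ∘ₗ δ + δ with hL
    have hL0 : ∀ i j : Fin (n + 1), L (EM i j) = 0 := by
      intro i j
      show tauMap (n + 1) (δ (EM i j)) + δ (EM i j) = 0
      rw [hδ i j]
      simp only [_root_.map_smul, map_sum, map_sub]
      have htau : ∀ a b : glC (n + 1), tauMap (n + 1) (a ⊗ₜ[ℂ] b) = b ⊗ₜ[ℂ] a := fun a b => rfl
      simp only [htau]
      rw [smul_sum_add]
      simp only [sub_add_sub_cancel, sub_self, add_zero, Finset.sum_const_zero, smul_zero]
    show L x = 0
    rw [hrep x]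
    simp only [map_sum, _root_.map_smul, hL0, smul_zero, Finset.sum_const_zero]
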